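/- There exists a positive integer n₀ such that for every integer n ≥ n₀, g(6n−2)² > g(6n)·g(6n−4); equivalently, g(6n−2)/g(6n−4) > g(6n)/g(6n−2). -/

import Mathlib

/-- `f n` is the number of relatively prime subsets of `{1, 2, ..., n}`,
i.e. subsets `A` with `gcd A = 1` (such subsets are automatically nonempty). -/
def f (n : ℕ) : ℕ :=
  ((Finset.Icc 1 n).powerset.filter (fun A => A.gcd id = 1)).card


/-- `g n` is the number of nonempty subsets `A` of `{1, 2, ..., n}` with
`gcd A > 1` and `gcd (gcd A) (n+1) = 1`. -/
def g (n : ℕ) : ℕ :=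
  ((Finset.Icc 1 n).powerset.filter
    (fun A => 1 < A.gcd id ∧ Nat.gcd (A.gcd id) (n + 1) = 1)).card

lemma gcd_image_mul (d : ℕ) (B : Finset ℕ) : (B.image (d * ·)).gcd id = d * B.gcd id := by
  rw [Finset.gcd_image]
  simpa using (Finset.gcd_mul_left (s := B) (f := id) (a := d))

lemma image_div_mul (d : ℕ) (A : Finset ℕ) (h : ∀ a ∈ A, d ∣ a) :
    (A.image (· / d)).image (d * ·) = A := by
  have h2 : Finset.image (fun a => d * (a / d)) A = Finset.image id A :=
    Finset.image_congr (fun a ha => Nat.mul_div_cancel' (h a ha))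
  rw [Finset.image_image]
  rw [show ((d * ·) ∘ (· / d)) = fun a => d * (a / d) from rfl]
  rw [h2, Finset.image_id]

lemma card_gcd_eq (N d : ℕ) (hd : 0 < d) :
    ((Finset.Icc 1 N).powerset.filter (fun A => A.gcd id = d)).card = f (N / d) := by
  rw [f]
  apply Finset.card_bij' (i := fun A _ => A.image (· / d)) (j := fun B _ => B.image (d * ·))
  · -- left_inv
    intro A hA
    simp only [Finset.mem_filter, Finset.mem_powerset] at hA
    exact image_div_mul d A (fun a ha => hA.2 ▸ Finset.gcd_dvd ha)
  · -- right_inv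
    intro B _
    have h2 : Finset.image (fun b => d * b / d) B = Finset.image id B :=
      Finset.image_congr (fun b _ => Nat.mul_div_cancel_left b hd)
    rw [Finset.image_image]
    rw [show ((· / d) ∘ (d * ·)) = fun b => d * b / d from rfl]
    rw [h2, Finset.image_id]
  · -- hi : maps into
    intro A hA
    simp only [Finset.mem_filter, Finset.mem_powerset] at hA ⊢
    obtain ⟨hsub, hgcd⟩ := hA
    have hdvd : ∀ a ∈ A, d ∣ a := fun a ha => hgcd ▸ Finset.gcd_dvd ha
    constructor
    · intro x hx
      simp only [Finset.mem_image] at hx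
      obtain ⟨a, ha, rfl⟩ := hx
      have haI := hsub ha
      simp only [Finset.mem_Icc] at haI ⊢
      have had := hdvd a ha
      constructor
      · rw [Nat.one_le_div_iff hd]; exact Nat.le_of_dvd haI.1 had
      · exact Nat.div_le_div_right haI.2
    · have := gcd_image_mul d (A.image (· / d))
      rw [image_div_mul d A hdvd, hgcd] at this
      refine Nat.eq_of_mul_eq_mul_left hd ?_
      rw [mul_one]
      exact this.symm
  · -- hj
    intro B hB
    simp only [Finset.mem_filter, Finset.mem_powerset] at hB ⊢
    obtain ⟨hsub, hgcd⟩ := hB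
    constructor
    · intro x hx
      simp only [Finset.mem_image] at hx
      obtain ⟨b, hb, rfl⟩ := hx
      have hbI := hsub hb
      simp only [Finset.mem_Icc] at hbI ⊢
      constructor
      · exact Nat.one_le_iff_ne_zero.mpr (Nat.mul_ne_zero (by omega) (by omega))
      · calc d * b ≤ d * (N / d) := Nat.mul_le_mul_left d hbI.2
          _ ≤ N := Nat.mul_div_le N d
    · rw [gcd_image_mul, hgcd, mul_one]

lemma g_eq_sum (N : ℕ) :
    g N = ∑ d ∈ (Finset.Icc 2 N).filter (fun d => Nat.gcd d (N+1) = 1), f (N / d) := by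
  rw [g]
  have hset : (Finset.Icc 1 N).powerset.filter
        (fun A => 1 < A.gcd id ∧ Nat.gcd (A.gcd id) (N+1) = 1)
      = ((Finset.Icc 2 N).filter (fun d => Nat.gcd d (N+1) = 1)).biUnion
        (fun d => (Finset.Icc 1 N).powerset.filter (fun A => A.gcd id = d)) := by
    ext A
    simp only [Finset.mem_filter, Finset.mem_powerset, Finset.mem_biUnion, Finset.mem_Icc]
    constructor
    · rintro ⟨hsub, hgt, hcop⟩
      refine ⟨A.gcd id, ⟨⟨hgt, ?_⟩, hcop⟩, hsub, rfl⟩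
      have hne : A.Nonempty := by
        by_contra h
        rw [Finset.not_nonempty_iff_eq_empty] at h
        subst h
        simp [Finset.gcd_empty] at hgt
      obtain ⟨a, ha⟩ := hne
      have haI := hsub ha; rw [Finset.mem_Icc] at haI
      exact le_trans (Nat.le_of_dvd (show 0 < id a from haI.1) (Finset.gcd_dvd ha)) haI.2
    · rintro ⟨d, ⟨⟨h2, _⟩, hcop⟩, hsub, rfl⟩
      exact ⟨hsub, h2, hcop⟩
  rw [hset, Finset.card_biUnion]
  · refine Finset.sum_congr rfl (fun d hd => card_gcd_eq N d ?_)
    simp only [Finset.mem_filter, Finset.mem_Icc] at hd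
    omega
  · intro d _ e _ hde
    apply Finset.disjoint_left.mpr
    intro A hA hA'
    simp only [Finset.mem_filter] at hA hA'
    exact hde (hA.2 ▸ hA'.2 ▸ rfl)

lemma f_lower (m : ℕ) : 2 ^ m ≤ f m + (m * 2 ^ (m / 2) + 1) := by
  have hcard : f m + ((Finset.Icc 1 m).powerset.filter (fun A => ¬ A.gcd id = 1)).card = 2 ^ m := by
    rw [f, Finset.card_filter_add_card_filter_not, Finset.card_powerset, Nat.card_Icc]
    norm_num
  have hsub : (Finset.Icc 1 m).powerset.filter (fun A => ¬ A.gcd id = 1) ⊆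
      insert ∅ ((Finset.Icc 2 m).biUnion
        (fun d => ((Finset.Icc 1 m).filter (fun a => d ∣ a)).powerset)) := by
    intro A hA
    simp only [Finset.mem_filter, Finset.mem_powerset] at hA
    obtain ⟨hAsub, hne1⟩ := hA
    rcases Finset.eq_empty_or_nonempty A with rfl | ⟨a, ha⟩
    · simp
    · rw [Finset.mem_insert]
      right
      rw [Finset.mem_biUnion]
      have haI := hAsub ha; rw [Finset.mem_Icc] at haI
      have hdvd := Finset.gcd_dvd (f := id) ha
      have hgpos : 0 < A.gcd id := Nat.pos_of_dvd_of_pos hdvd (show 0 < id a from haI.1)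
      refine ⟨A.gcd id, ?_, ?_⟩
      · rw [Finset.mem_Icc]
        exact ⟨by omega, le_trans (Nat.le_of_dvd (show 0 < id a from haI.1) hdvd) haI.2⟩
      · rw [Finset.mem_powerset]
        intro x hx
        rw [Finset.mem_filter]
        exact ⟨hAsub hx, Finset.gcd_dvd hx⟩
  have hbad : ((Finset.Icc 1 m).powerset.filter (fun A => ¬ A.gcd id = 1)).card
      ≤ m * 2 ^ (m / 2) + 1 := by
    calc ((Finset.Icc 1 m).powerset.filter (fun A => ¬ A.gcd id = 1)).card
        ≤ (insert ∅ ((Finset.Icc 2 m).biUnion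
            (fun d => ((Finset.Icc 1 m).filter (fun a => d ∣ a)).powerset))).card :=
          Finset.card_le_card hsub
      _ ≤ ((Finset.Icc 2 m).biUnion
            (fun d => ((Finset.Icc 1 m).filter (fun a => d ∣ a)).powerset)).card + 1 :=
          Finset.card_insert_le _ _
      _ ≤ (∑ d ∈ Finset.Icc 2 m, (((Finset.Icc 1 m).filter (fun a => d ∣ a)).powerset).card) + 1 :=
          by gcongr; exact Finset.card_biUnion_le
      _ ≤ (∑ _d ∈ Finset.Icc 2 m, 2 ^ (m / 2)) + 1 := by
          gcongr with d hd
          rw [Finset.card_powerset]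
          have h1 : Finset.Icc 1 m = Finset.Ioc 0 m := rfl
          have h2 : ((Finset.Icc 1 m).filter (fun a => d ∣ a)).card = m / d := by
            rw [h1]
            exact Nat.Ioc_filter_dvd_card_eq_div m d
          rw [h2]
          apply Nat.pow_le_pow_right (by norm_num)
          apply Nat.div_le_div_left
          · simp only [Finset.mem_Icc] at hd; omega
          · omega
      _ ≤ m * 2 ^ (m / 2) + 1 := by
          rw [Finset.sum_const, Nat.card_Icc, smul_eq_mul]
          gcongr
          omega
  omega

lemma f_le (m : ℕ) : f m ≤ 2 ^ m := by
  calc f m ≤ (Finset.Icc 1 m).powerset.card := Finset.card_filter_le _ _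
  _ = 2 ^ m := by rw [Finset.card_powerset, Nat.card_Icc]; norm_num

lemma g_lower2 (N : ℕ) (hN : 3 ≤ N) (h2 : Nat.gcd 2 (N+1) = 1) (h3 : Nat.gcd 3 (N+1) = 1) :
    f (N/2) + f (N/3) ≤ g N := by
  rw [g_eq_sum]
  have hsub : ({2, 3} : Finset ℕ) ⊆ (Finset.Icc 2 N).filter (fun d => Nat.gcd d (N+1) = 1) := by
    intro x hx
    simp only [Finset.mem_insert, Finset.mem_singleton] at hx
    rcases hx with rfl | rfl
    · simp only [Finset.mem_filter, Finset.mem_Icc]; exact ⟨⟨by omega, by omega⟩, h2⟩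
    · simp only [Finset.mem_filter, Finset.mem_Icc]; exact ⟨⟨by omega, by omega⟩, h3⟩
  calc f (N/2) + f (N/3) = ∑ d ∈ ({2, 3} : Finset ℕ), f (N / d) := by
        rw [Finset.sum_pair (by norm_num)]
    _ ≤ _ := Finset.sum_le_sum_of_subset hsub

lemma g_upper (N : ℕ) : g N ≤ f (N/2) + f (N/3) + N * 2 ^ (N/4) := by
  rw [g_eq_sum]
  set D := (Finset.Icc 2 N).filter (fun d => Nat.gcd d (N+1) = 1) with hD
  rw [← Finset.sum_filter_add_sum_filter_not D (fun d => d ≤ 3) (fun d => f (N / d))]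
  gcongr ?_ + ?_
  · have hsub : D.filter (fun d => d ≤ 3) ⊆ ({2, 3} : Finset ℕ) := by
      intro x hx
      simp only [hD, Finset.mem_filter, Finset.mem_Icc] at hx
      simp only [Finset.mem_insert, Finset.mem_singleton]
      omega
    calc ∑ d ∈ D.filter (fun d => d ≤ 3), f (N / d)
        ≤ ∑ d ∈ ({2, 3} : Finset ℕ), f (N / d) := Finset.sum_le_sum_of_subset hsub
      _ = f (N/2) + f (N/3) := Finset.sum_pair (by norm_num)
  · calc ∑ d ∈ D.filter (fun d => ¬ d ≤ 3), f (N / d)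
        ≤ (D.filter (fun d => ¬ d ≤ 3)).card • 2 ^ (N/4) := by
          apply Finset.sum_le_card_nsmul
          intro d hd
          simp only [hD, Finset.mem_filter, Finset.mem_Icc] at hd
          calc f (N / d) ≤ 2 ^ (N / d) := f_le _
            _ ≤ 2 ^ (N / 4) := by
              apply Nat.pow_le_pow_right (by norm_num)
              apply Nat.div_le_div_left (by omega) (by omega)
      _ ≤ N * 2 ^ (N/4) := by
          rw [smul_eq_mul]
          gcongr
          calc (D.filter (fun d => ¬ d ≤ 3)).card ≤ D.card := Finset.card_filter_le _ _
            _ ≤ (Finset.Icc 2 N).card := Finset.card_filter_le _ _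
            _ ≤ N := by rw [Nat.card_Icc]; omega

lemma g_upper' (N : ℕ) (h3 : 3 ∣ N + 1) : g N ≤ f (N/2) + N * 2 ^ (N/4) := by
  rw [g_eq_sum]
  set D := (Finset.Icc 2 N).filter (fun d => Nat.gcd d (N+1) = 1) with hD
  rw [← Finset.sum_filter_add_sum_filter_not D (fun d => d ≤ 3) (fun d => f (N / d))]
  gcongr ?_ + ?_
  · have hsub : D.filter (fun d => d ≤ 3) ⊆ ({2} : Finset ℕ) := by
      intro x hx
      simp only [hD, Finset.mem_filter, Finset.mem_Icc] at hx
      simp only [Finset.mem_singleton]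
      rcases hx with ⟨⟨⟨hx2, _⟩, hcop⟩, hx3⟩
      interval_cases x
      · rfl
      · exfalso
        rw [Nat.gcd_eq_left h3] at hcop
        omega
    calc ∑ d ∈ D.filter (fun d => d ≤ 3), f (N / d)
        ≤ ∑ d ∈ ({2} : Finset ℕ), f (N / d) := Finset.sum_le_sum_of_subset hsub
      _ = f (N/2) := Finset.sum_singleton _ _
  · calc ∑ d ∈ D.filter (fun d => ¬ d ≤ 3), f (N / d)
        ≤ (D.filter (fun d => ¬ d ≤ 3)).card • 2 ^ (N/4) := by
          apply Finset.sum_le_card_nsmul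
          intro d hd
          simp only [hD, Finset.mem_filter, Finset.mem_Icc] at hd
          calc f (N / d) ≤ 2 ^ (N / d) := f_le _
            _ ≤ 2 ^ (N / 4) := by
              apply Nat.pow_le_pow_right (by norm_num)
              apply Nat.div_le_div_left (by omega) (by omega)
      _ ≤ N * 2 ^ (N/4) := by
          rw [smul_eq_mul]
          gcongr
          calc (D.filter (fun d => ¬ d ≤ 3)).card ≤ D.card := Finset.card_filter_le _ _
            _ ≤ (Finset.Icc 2 N).card := Finset.card_filter_le _ _
            _ ≤ N := by rw [Nat.card_Icc]; omega

lemma four_mul_le (q : ℕ) (h : 4 ≤ q) : 4 * q ≤ 2 ^ q := by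
  induction q with
  | zero => omega
  | succ m ih =>
    rcases Nat.lt_or_ge m 4 with h4 | h4
    · have hm : m = 3 := by omega
      subst hm; norm_num
    · have := ih h4
      rw [pow_succ]; omega

lemma n_le_pow (n : ℕ) (h : 16 ≤ n) : n ≤ 2 ^ (n / 4 + 1) := by
  have hq : 4 ≤ n / 4 := by omega
  have h4 := four_mul_le (n/4) hq
  calc n ≤ 2*(4*(n/4)) := by omega
    _ ≤ 2 * 2^(n/4) := by omega
    _ = 2^(n/4+1) := by rw [pow_succ]; ring

lemma mul_pow_le (n a e c : ℕ) (hn : 16 ≤ n) (ha : a ≤ 8 * n) (hec : n/4 + 4 + e ≤ c) :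
    a * 2^e ≤ 2^c := by
  have hnp := n_le_pow n hn
  calc a * 2^e ≤ 8 * 2^(n/4+1) * 2^e := by
        apply Nat.mul_le_mul_right
        calc a ≤ 8 * n := ha
          _ ≤ 8 * 2^(n/4+1) := Nat.mul_le_mul_left 8 hnp
    _ = 2^(n/4+4+e) := by
        rw [show (8:ℕ) = 2^3 from rfl, ← pow_add, ← pow_add]
        congr 1; omega
    _ ≤ 2^c := Nat.pow_le_pow_right (by norm_num) hec

lemma errA (n : ℕ) (h : 100 ≤ n) :
    (3*n-1) * 2^((3*n-1)/2) + 1 + ((2*n-1) * 2^((2*n-1)/2) + 1) ≤ 2^(2*n-6) := by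
  have t1 : (3*n-1) * 2^((3*n-1)/2) ≤ 2^(2*n-8) :=
    mul_pow_le n _ _ _ (by omega) (by omega) (by omega)
  have t2 : (2*n-1) * 2^((2*n-1)/2) ≤ 2^(2*n-8) :=
    mul_pow_le n _ _ _ (by omega) (by omega) (by omega)
  have t3 : (1:ℕ) ≤ 2^(2*n-8) := Nat.one_le_two_pow
  have t4 : 2^(2*n-8) * 4 = 2^(2*n-6) := by
    rw [show (4:ℕ) = 2^2 from rfl, ← pow_add]
    congr 1; omega
  linarith

lemma errB (n : ℕ) (h : 100 ≤ n) : 6*n * 2^((6*n)/4) ≤ 2^(2*n-6) :=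
  mul_pow_le n _ _ _ (by omega) (by omega) (by omega)

lemma errC (n : ℕ) (h : 100 ≤ n) : (6*n-4) * 2^((6*n-4)/4) ≤ 2^(2*n-6) :=
  mul_pow_le n _ _ _ (by omega) (by omega) (by omega)

lemma gcd_one_mod (k m : ℕ) (h : m % k = 1) : Nat.gcd k m = 1 := by
  rw [Nat.gcd_rec, h, Nat.gcd_one_left]

lemma gcd_three_two (m : ℕ) (h : m % 3 = 2) : Nat.gcd 3 m = 1 := by
  rw [Nat.gcd_rec, h]; rfl

theorem stmt_12 :
    ∃ n₀ : ℕ, 0 < n₀ ∧ ∀ n : ℕ, n₀ ≤ n →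
      g (6 * n - 2) ^ 2 > g (6 * n) * g (6 * n - 4) := by
  refine ⟨100, by norm_num, ?_⟩
  intro n hn
  have h2a : Nat.gcd 2 (6*n - 2 + 1) = 1 := gcd_one_mod 2 _ (by omega)
  have h3a : Nat.gcd 3 (6*n - 2 + 1) = 1 := gcd_three_two _ (by omega)
  have hlow := g_lower2 (6*n-2) (by omega) h2a h3a
  rw [show (6*n-2)/2 = 3*n-1 by omega, show (6*n-2)/3 = 2*n-1 by omega] at hlow
  have hfl1 := f_lower (3*n-1)
  have hfl2 := f_lower (2*n-1)
  have herrA := errA n hn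
  have h1 : 2^(3*n-1) + 2^(2*n-1) ≤ g (6*n-2) + 2^(2*n-6) := by linarith
  have hupB := g_upper (6*n)
  rw [show (6*n)/2 = 3*n by omega, show (6*n)/3 = 2*n by omega] at hupB
  have herrB := errB n hn
  have hf3n := f_le (3*n)
  have hf2n := f_le (2*n)
  have h2 : g (6*n) ≤ 2^(3*n) + 2^(2*n) + 2^(2*n-6) := by linarith
  have hupC := g_upper' (6*n-4) ⟨2*n-1, by omega⟩
  rw [show (6*n-4)/2 = 3*n-2 by omega] at hupC
  have herrC := errC n hn
  have hf3n2 := f_le (3*n-2)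
  have h3 : g (6*n-4) ≤ 2^(3*n-2) + 2^(2*n-6) := by linarith
  clear hlow hfl1 hfl2 herrA hupB herrB hf3n hf2n hupC herrC hf3n2 h2a h3a
  obtain ⟨k, rfl⟩ := Nat.exists_eq_add_of_le hn
  have hx : 0 < (2:ℕ)^k := Nat.pow_pos (by norm_num)
  have hy : 0 < (2:ℕ)^194 := by norm_num
  have ex1 : (2:ℕ)^(3*(100+k)-1) = 2^105 * 2^194 * ((2:ℕ)^k)^3 := by
    rw [← pow_mul, ← pow_add, ← pow_add]; congr 1; omega
  have ex2 : (2:ℕ)^(2*(100+k)-1) = 2^5 * 2^194 * ((2:ℕ)^k)^2 := by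
    rw [← pow_mul, ← pow_add, ← pow_add]; congr 1; omega
  have ex3 : (2:ℕ)^(2*(100+k)-6) = 2^194 * ((2:ℕ)^k)^2 := by
    rw [← pow_mul, ← pow_add]; congr 1; omega
  have ex4 : (2:ℕ)^(3*(100+k)) = 2^106 * 2^194 * ((2:ℕ)^k)^3 := by
    rw [← pow_mul, ← pow_add, ← pow_add]; congr 1; omega
  have ex5 : (2:ℕ)^(2*(100+k)) = 2^6 * 2^194 * ((2:ℕ)^k)^2 := by
    rw [← pow_mul, ← pow_add, ← pow_add]; congr 1; omega
  have ex6 : (2:ℕ)^(3*(100+k)-2) = 2^104 * 2^194 * ((2:ℕ)^k)^3 := by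
    rw [← pow_mul, ← pow_add, ← pow_add]; congr 1; omega
  rw [ex1, ex2, ex3] at h1
  rw [ex4, ex5, ex3] at h2
  rw [ex6, ex3] at h3
  set x := (2:ℕ)^k with hxdef
  set y := (2:ℕ)^194 with hydef
  have ha : 2^105 * (y * x^3) + 31 * (y * x^2) ≤ g (6*(100+k)-2) := by linarith
  have hb : g (6*(100+k)) ≤ 2^106 * (y * x^3) + 65 * (y * x^2) := by linarith
  have hc : g (6*(100+k)-4) ≤ 2^104 * (y * x^3) + 1 * (y * x^2) := by linarith
  have key : (2^106 * (y * x^3) + 65 * (y * x^2)) * (2^104 * (y * x^3) + 1 * (y * x^2))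
      < (2^105 * (y * x^3) + 31 * (y * x^2))^2 := by
    nlinarith [mul_pos (mul_pos hy hy) (pow_pos hx 5),
      mul_pos (mul_pos hy hy) (pow_pos hx 4)]
  calc g (6*(100+k)) * g (6*(100+k)-4)
      ≤ (2^106 * (y * x^3) + 65 * (y * x^2)) * (2^104 * (y * x^3) + 1 * (y * x^2)) :=
        Nat.mul_le_mul hb hc
    _ < (2^105 * (y * x^3) + 31 * (y * x^2))^2 := key
    _ ≤ g (6*(100+k)-2)^2 := Nat.pow_le_pow_left ha 2
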